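/- Let α, β, t be nonnegative real numbers with α + β = 1, let ζ ∈ ℂ with ‖ζ‖ = 1, and let b be the 2×2 complex matrix !![α, 0; ζ·t, β]. Then the trace norm of b equals √(1 + t²); precisely, the trace of the positive semidefinite square root of bᴴ * b equals √(1 + t²). -/

import Mathlib

open scoped ComplexOrder
open Matrix

private lemma psd_real_smul {n : Type*} [Fintype n] {A : Matrix n n ℂ} (hA : A.PosSemidef)
    {c : ℝ} (hc : 0 ≤ c) : ((c : ℂ) • A).PosSemidef := by
  constructor
  · unfold Matrix.IsHermitian
    rw [Matrix.conjTranspose_smul, hA.1.eq]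
    congr 1
    simp [Complex.star_def, Complex.conj_ofReal]
  · intro x
    simpa [← Finsupp.smul_sum, Finsupp.sum, Finset.mul_sum, mul_assoc, mul_left_comm] using
      mul_nonneg (show (0:ℂ) ≤ c by exact_mod_cast Complex.zero_le_real.2 hc) (hA.2 x)

/-- The positive semidefinite square root of a positive semidefinite matrix
(as defined in Mathlib of December 2024, since removed). -/
noncomputable def Matrix.PosSemidef.sqrt {n : Type*} [Fintype n] [DecidableEq n] {𝕜 : Type*}
    [RCLike 𝕜] {A : Matrix n n 𝕜} (hA : A.PosSemidef) : Matrix n n 𝕜 :=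
  hA.1.eigenvectorUnitary.1 * Matrix.diagonal ((↑) ∘ (√·) ∘ hA.1.eigenvalues) *
  (star hA.1.eigenvectorUnitary : Matrix n n 𝕜)

open scoped MatrixOrder in
lemma Matrix.PosSemidef.eq_sqrt_of_sq_eq {n : Type*} [Fintype n] [DecidableEq n]
    {B A : Matrix n n ℂ} (hB : B.PosSemidef) (hA : A.PosSemidef) (h : B ^ 2 = A) :
    B = hA.sqrt := by
  have h1 : CFC.sqrt A = B := CFC.sqrt_unique (by rw [← h, sq]) hB.nonneg
  rw [← h1, CFC.sqrt_eq_cfc, cfc_nnreal_eq_real _ A hA.nonneg, hA.1.cfc_eq,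
    Matrix.IsHermitian.cfc, Unitary.conjStarAlgAut_apply, Matrix.PosSemidef.sqrt]
  congr 3
  funext i
  simp [Real.coe_sqrt, Real.coe_toNNReal', hA.eigenvalues_nonneg i]

/-- Example 2 after Theorem 3.2: for `α, β, t ≥ 0` with `α + β = 1` and a unimodular
`ζ ∈ ℂ`, the trace norm of `b = !![α, 0; ζt, β]` equals `√(1 + t²)`: the trace of the
positive semidefinite square root of `bᴴ * b` is `√(1 + t²)`. -/
theorem trace_norm_example (α β t : ℝ) (hα : 0 ≤ α) (hβ : 0 ≤ β) (ht : 0 ≤ t)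
    (hαβ : α + β = 1) (ζ : ℂ) (hζ : ‖ζ‖ = 1) :
    (Matrix.posSemidef_conjTranspose_mul_self
        (!![(α : ℂ), 0; ζ * (t : ℂ), (β : ℂ)])).sqrt.trace
      = (Real.sqrt (1 + t ^ 2) : ℂ) := by
  set b : Matrix (Fin 2) (Fin 2) ℂ := !![(α : ℂ), 0; ζ * (t : ℂ), (β : ℂ)] with hb
  set A : Matrix (Fin 2) (Fin 2) ℂ := bᴴ * b with hAdef
  have hA : A.PosSemidef := Matrix.posSemidef_conjTranspose_mul_self b
  have habs : ‖ζ‖ = 1 := hζ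
  have hzz : (starRingEnd ℂ) ζ * ζ = 1 := by
    rw [mul_comm, Complex.mul_conj]
    norm_cast
    simp [Complex.normSq_eq_norm_sq, habs]
  have hζ0 : ζ ≠ 0 := by
    rintro rfl; simp at hzz
  have hconj : (starRingEnd ℂ) ζ = ζ⁻¹ := eq_inv_of_mul_eq_one_left hzz
  have hβ' : (β : ℂ) = 1 - (α : ℂ) := by
    have : β = 1 - α := by linarith
    rw [this]; push_cast; ring
  have h1t : (0:ℝ) < 1 + t ^ 2 := by positivity
  set r : ℝ := Real.sqrt (1 + t ^ 2) with hrdef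
  have hr2 : r ^ 2 = 1 + t ^ 2 := Real.sq_sqrt h1t.le
  have hr0 : 0 < r := Real.sqrt_pos.2 h1t
  set s : Matrix (Fin 2) (Fin 2) ℂ :=
    ((r⁻¹ : ℝ) : ℂ) • (A + ((α * β : ℝ) : ℂ) • 1) with hsdef
  have hs : s.PosSemidef :=
    psd_real_smul (hA.add (psd_real_smul Matrix.PosSemidef.one (mul_nonneg hα hβ)))
      (inv_nonneg.2 hr0.le)
  have hrc2 : ((r : ℂ)) ^ 2 = 1 + (t : ℂ) ^ 2 := by exact_mod_cast congrArg Complex.ofReal hr2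
  have hrc0 : (r : ℂ) ≠ 0 := by exact_mod_cast hr0.ne'
  have hsq : s ^ 2 = A := by
    have h2 : (A + ((α * β : ℝ) : ℂ) • 1) ^ 2 = (((1 + t ^ 2 : ℝ)) : ℂ) • A := by
      ext i j
      fin_cases i <;> fin_cases j <;>
        simp [hAdef, hb, pow_two, Matrix.mul_apply, Fin.sum_univ_succ,
          Matrix.conjTranspose_apply, Complex.star_def, Matrix.one_apply, hconj, hβ'] <;>
        field_simp <;> ring
    rw [hsdef, smul_pow, h2, smul_smul]
    have hone : (((r⁻¹:ℝ):ℂ)) ^ 2 * (((1 + t ^ 2 : ℝ)) : ℂ) = 1 := by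
      push_cast
      rw [← hrc2]
      field_simp
    rw [hone, one_smul]
  have hkey := hs.eq_sqrt_of_sq_eq hA hsq
  rw [← hkey, hsdef]
  have htr : (A + ((α * β : ℝ) : ℂ) • 1).trace = ((1 + t ^ 2 : ℝ) : ℂ) / (1 : ℂ) * 1 := by
    simp [Matrix.trace, hAdef, hb, Matrix.mul_apply, Fin.sum_univ_succ,
      Matrix.conjTranspose_apply, Complex.star_def, hconj, hβ', Matrix.one_apply]
    field_simp
    ring
  rw [Matrix.trace_smul, htr]
  push_cast
  rw [← hrc2]
  field_simp
  rw [smul_eq_mul]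
  field_simp
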